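/- Let J and K be disjoint nonempty finite sets, p, Δp, a : J ∪ K → ℝ with 0 < Δp i ≤ p i and 0 < a i ≤ 1, and constants C, β > 0. Suppose C·p j·a j > β·Δp j for all j ∈ J and C·p k·a k < β·Δp k for all k ∈ K, and ∑_{j∈J} p j·a j = ∑_{k∈K} p k·a k. Define A₁ = (∑_{j∈J} p j + ∑_{k∈K}(p k − Δp k)) / (∑_{j∈J} p j·a j) and A₂ = (∑_{j∈J}(p j − Δp j) + ∑_{k∈K} p k) / (∑_{k∈K} p k·a k). Then A₁ < A₂. -/

import Mathlib

theorem lift_based_more_actions_attribution {ι : Type*} [DecidableEq ι]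
    (J K : Finset ι) (hdisj : Disjoint J K)
    (hJ : J.Nonempty) (hK : K.Nonempty)
    (p Δp a : ι → ℝ)
    (hΔ : ∀ i ∈ J ∪ K, 0 < Δp i ∧ Δp i ≤ p i)
    (ha : ∀ i ∈ J ∪ K, 0 < a i ∧ a i ≤ 1)
    (C β : ℝ) (hC : 0 < C) (hβ : 0 < β)
    (hJwin : ∀ j ∈ J, C * p j * a j > β * Δp j)
    (hKwin : ∀ k ∈ K, C * p k * a k < β * Δp k)
    (hattr : ∑ j ∈ J, p j * a j = ∑ k ∈ K, p k * a k) :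
    (∑ j ∈ J, p j + ∑ k ∈ K, (p k - Δp k)) / (∑ j ∈ J, p j * a j)
      < (∑ j ∈ J, (p j - Δp j) + ∑ k ∈ K, p k) / (∑ k ∈ K, p k * a k) := by
  have hden : 0 < ∑ j ∈ J, p j * a j := by
    apply Finset.sum_pos _ hJ
    intro i hi
    have h1 := hΔ i (Finset.mem_union_left _ hi)
    have h2 := ha i (Finset.mem_union_left _ hi)
    exact mul_pos (lt_of_lt_of_le h1.1 h1.2) h2.1
  have hden2 : 0 < ∑ k ∈ K, p k * a k := hattr ▸ hden
  rw [div_lt_div_iff₀ hden hden2, ← hattr]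
  have hnum : ∑ j ∈ J, Δp j < ∑ k ∈ K, Δp k := by
    have h1 : ∑ j ∈ J, Δp j < ∑ j ∈ J, (C / β) * (p j * a j) := by
      apply Finset.sum_lt_sum_of_nonempty hJ
      intro j hj
      have h := hJwin j hj
      rw [div_mul_eq_mul_div, lt_div_iff₀ hβ]
      nlinarith
    have h2 : ∑ k ∈ K, (C / β) * (p k * a k) < ∑ k ∈ K, Δp k := by
      apply Finset.sum_lt_sum_of_nonempty hK
      intro k hk
      calc C / β * (p k * a k) = C * p k * a k / β := by ring
        _ < β * Δp k / β := by
            apply div_lt_div_of_pos_right (hKwin k hk) hβ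
        _ = Δp k := by field_simp
    calc ∑ j ∈ J, Δp j < ∑ j ∈ J, (C / β) * (p j * a j) := h1
      _ = (C / β) * ∑ j ∈ J, p j * a j := by rw [Finset.mul_sum]
      _ = ∑ k ∈ K, (C / β) * (p k * a k) := by rw [hattr, Finset.mul_sum]
      _ < ∑ k ∈ K, Δp k := h2
  have e1 : ∑ k ∈ K, (p k - Δp k) = ∑ k ∈ K, p k - ∑ k ∈ K, Δp k :=
    Finset.sum_sub_distrib _ _
  have e2 : ∑ j ∈ J, (p j - Δp j) = ∑ j ∈ J, p j - ∑ j ∈ J, Δp j :=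
    Finset.sum_sub_distrib _ _
  rw [e1, e2]
  nlinarith [hden]
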